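/- Let ω₀ > 0, m_D > 0, m_C > 0, k > 0, b ≥ 0 be reals and N a positive integer; set m_r = m_C·m_D/(N·m_D + m_C), and let A₁ be the real 4×4 matrix with rows (0, 1, 0, 0), (−3ω₀²·m_r/m_D, 0, 0, 2ω₀), (0, 0, 0, 1), (0, −2ω₀, 3ω₀² − k/m_D, −b/m_D). Then every complex eigenvalue ρ of A₁ satisfies Re ρ < 0 if and only if b > 0 and k > 3ω₀²·m_D. -/

import Mathlib

open Matrix Polynomial

/-- A quartic `x⁴ + a₁x³ + (W+α)x² + α a₁ x + α(W − 4w²)` with `a₁, α > 0`,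
`W > 4w² > 0` is Hurwitz stable (Routh–Hurwitz). -/
lemma quartic_stable (a1 al W w : ℝ) (hw : 0 < w) (ha1 : 0 < a1) (hal : 0 < al)
    (hW : 4 * w ^ 2 < W) :
    ∀ ρ : ℂ, ρ ^ 4 + (a1 : ℂ) * ρ ^ 3 + ((W + al : ℝ) : ℂ) * ρ ^ 2
      + ((al * a1 : ℝ) : ℂ) * ρ + ((al * (W - 4 * w ^ 2) : ℝ) : ℂ) = 0 → ρ.re < 0 := by
  intro ρ h
  by_contra hre
  push_neg at hre
  set σ := ρ.re with hσdef
  set τ := ρ.im with hτdef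
  have hWpos : 0 < W := lt_trans (by positivity) hW
  -- extract real and imaginary parts of the equation
  have h1 := congrArg Complex.re h
  have h2 := congrArg Complex.im h
  simp only [Complex.add_re, Complex.add_im, Complex.mul_re, Complex.mul_im,
    Complex.ofReal_re, Complex.ofReal_im, Complex.zero_re, Complex.zero_im,
    pow_succ, pow_zero, Complex.one_re, Complex.one_im, mul_one,
    one_mul] at h1 h2
  have hre0 : σ ^ 4 - 6 * σ ^ 2 * τ ^ 2 + τ ^ 4 + a1 * (σ ^ 3 - 3 * σ * τ ^ 2)
      + (W + al) * (σ ^ 2 - τ ^ 2) + al * a1 * σ + al * (W - 4 * w ^ 2) = 0 := by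
    linear_combination h1
  have him0 : τ * (τ ^ 2 * (4 * σ + a1)
      - (4 * σ ^ 3 + 3 * a1 * σ ^ 2 + 2 * (W + al) * σ + al * a1)) = 0 := by
    linear_combination -h2
  rcases eq_or_ne τ 0 with hτ | hτ
  · -- real root case: all coefficients positive
    rw [hτ] at hre0
    have t4 : 0 < al * (W - 4 * w ^ 2) := by nlinarith
    have t0 : 0 ≤ σ ^ 4 := by positivity
    have t1 : 0 ≤ a1 * σ ^ 3 := by positivity
    have t2 : 0 ≤ (W + al) * σ ^ 2 := by positivity
    have t3 : 0 ≤ al * a1 * σ := by positivity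
    nlinarith
  · -- genuinely complex root
    have him1 : τ ^ 2 * (4 * σ + a1)
        - (4 * σ ^ 3 + 3 * a1 * σ ^ 2 + 2 * (W + al) * σ + al * a1) = 0 :=
      (mul_eq_zero.mp him0).resolve_left hτ
    -- the Routh–Hurwitz combination
    have hE0 : 4 * a1 ^ 2 * al * w ^ 2
        + σ * (2 * a1 * ((W - al) ^ 2 + 16 * al * w ^ 2 + a1 ^ 2 * al))
        + σ ^ 2 * (4 * (W - al) ^ 2 + 64 * al * w ^ 2 + 12 * a1 ^ 2 * al + 8 * a1 ^ 2 * W)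
        + σ ^ 3 * (8 * a1 * (4 * W + 4 * al + a1 ^ 2))
        + σ ^ 4 * (32 * W + 32 * al + 48 * a1 ^ 2)
        + σ ^ 5 * (96 * a1) + σ ^ 6 * 64 = 0 := by
      linear_combination (-(4 * σ + a1) ^ 2) * hre0
        + (τ ^ 2 * (4 * σ + a1)
            + (4 * σ ^ 3 + 3 * a1 * σ ^ 2 + 2 * (W + al) * σ + al * a1)
            - (4 * σ + a1) * (6 * σ ^ 2 + 3 * a1 * σ + (W + al))) * him1
    have p0 : 0 < 4 * a1 ^ 2 * al * w ^ 2 := by positivity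
    have p1 : 0 ≤ σ * (2 * a1 * ((W - al) ^ 2 + 16 * al * w ^ 2 + a1 ^ 2 * al)) := by
      apply mul_nonneg hre; positivity
    have p2 : 0 ≤ σ ^ 2 * (4 * (W - al) ^ 2 + 64 * al * w ^ 2 + 12 * a1 ^ 2 * al
        + 8 * a1 ^ 2 * W) := by apply mul_nonneg (by positivity); positivity
    have p3 : 0 ≤ σ ^ 3 * (8 * a1 * (4 * W + 4 * al + a1 ^ 2)) := by
      apply mul_nonneg (pow_nonneg hre 3); positivity
    have p4 : 0 ≤ σ ^ 4 * (32 * W + 32 * al + 48 * a1 ^ 2) := by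
      apply mul_nonneg (by positivity); positivity
    have p5 : 0 ≤ σ ^ 5 * (96 * a1) := by
      apply mul_nonneg (pow_nonneg hre 5); positivity
    have p6 : 0 ≤ σ ^ 6 * 64 := by positivity
    linarith

/-- If the constant coefficient is nonpositive, the quartic has a nonnegative real root. -/
lemma quartic_unstable_k (a1 al W w : ℝ) (ha1 : 0 ≤ a1) (hal : 0 < al)
    (hWpos : 0 < W) (hW : W ≤ 4 * w ^ 2) :
    ∃ σ : ℝ, 0 ≤ σ ∧ σ ^ 4 + a1 * σ ^ 3 + (W + al) * σ ^ 2 + al * a1 * σ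
      + al * (W - 4 * w ^ 2) = 0 := by
  set f : ℝ → ℝ := fun x => x ^ 4 + a1 * x ^ 3 + (W + al) * x ^ 2 + al * a1 * x
      + al * (W - 4 * w ^ 2) with hf
  set R : ℝ := 1 + al * (4 * w ^ 2 - W) with hR
  have hR1 : (1 : ℝ) ≤ R := by nlinarith
  have hfc : ContinuousOn f (Set.Icc 0 R) := by fun_prop
  have hf0 : f 0 ≤ 0 := by simp [hf]; nlinarith
  have hfR : 0 ≤ f R := by
    have hR0 : (0:ℝ) ≤ R := le_trans zero_le_one hR1
    have hRR : R ≤ R ^ 4 := le_self_pow₀ hR1 (by norm_num)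
    have hc4 : al * (W - 4 * w ^ 2) = 1 - R := by rw [hR]; ring
    have q1 : 0 ≤ a1 * R ^ 3 := by positivity
    have q2 : 0 ≤ (W + al) * R ^ 2 := by positivity
    have q3 : 0 ≤ al * a1 * R := by positivity
    simp only [hf]
    linarith
  have := intermediate_value_Icc (le_trans zero_le_one hR1) hfc
  obtain ⟨σ, hσmem, hfσ⟩ := this (Set.mem_Icc.mpr ⟨hf0, hfR⟩)
  exact ⟨σ, hσmem.1, hfσ⟩

/-- If the damping vanishes (but the stiffness condition holds), there is a purely
imaginary root. -/
lemma quartic_unstable_b (al W w : ℝ) (hw : 0 < w) (hal : 0 < al) (hW : 4 * w ^ 2 < W) :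
    ∃ ρ : ℂ, ρ ^ 4 + ((W + al : ℝ) : ℂ) * ρ ^ 2 + ((al * (W - 4 * w ^ 2) : ℝ) : ℂ) = 0
      ∧ ρ.re = 0 := by
  set S : ℝ := W + al with hS
  set P : ℝ := al * (W - 4 * w ^ 2) with hP
  have hPpos : 0 < P := by rw [hP]; nlinarith
  have hSpos : 0 < S := by rw [hS]; nlinarith
  have hdisc : 0 ≤ S ^ 2 - 4 * P := by rw [hS, hP]; nlinarith [sq_nonneg (W - al)]
  set d : ℝ := Real.sqrt (S ^ 2 - 4 * P) with hd
  have hd0 : 0 ≤ d := Real.sqrt_nonneg _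
  have hd2 : d ^ 2 = S ^ 2 - 4 * P := Real.sq_sqrt hdisc
  have hdS : d < S := by nlinarith
  set t : ℝ := (S - d) / 2 with ht
  have htpos : 0 < t := by rw [ht]; linarith
  have hteq : t ^ 2 - S * t + P = 0 := by rw [ht]; linear_combination (1/4 : ℝ) * hd2
  refine ⟨Complex.I * (Real.sqrt t : ℝ), ?_, by simp⟩
  have hst : ((Real.sqrt t : ℝ) : ℂ) ^ 2 = (t : ℂ) := by
    rw [← Complex.ofReal_pow, Real.sq_sqrt htpos.le]
  have hρ2 : (Complex.I * (Real.sqrt t : ℝ)) ^ 2 = -(t : ℂ) := by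
    rw [mul_pow, Complex.I_sq, hst]; ring
  have hρ4 : (Complex.I * (Real.sqrt t : ℝ)) ^ 4 = (t : ℂ) ^ 2 := by
    rw [show (4 : ℕ) = 2 * 2 from rfl, pow_mul, hρ2]; ring
  rw [hρ4, hρ2]
  have hC : ((t ^ 2 - S * t + P : ℝ) : ℂ) = 0 := by exact_mod_cast congrArg Complex.ofReal hteq
  push_cast [hS, hP] at hC ⊢
  linear_combination hC

/-- Routh–Hurwitz analysis of the linearized in-plane dynamics of the relative
motion between deputy satellites: all complex eigenvalues (roots of the
characteristic polynomial) of the matrix `A₁` lie in the open left half-plane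
iff `b > 0` and `k > 3ω₀²·m_D`. -/
theorem deputy_relative_motion_stability (ω₀ mD mC k b : ℝ) (N : ℕ)
    (hω₀ : 0 < ω₀) (hmD : 0 < mD) (hmC : 0 < mC) (hk : 0 < k) (hb : 0 ≤ b)
    (hN : 0 < N) (mr : ℝ) (hmr : mr = mC * mD / ((N : ℝ) * mD + mC)) :
    (∀ ρ : ℂ,
        (Polynomial.aeval ρ)
          (Matrix.charpoly
            (!![0, 1, 0, 0;
                -3 * ω₀ ^ 2 * mr / mD, 0, 0, 2 * ω₀;
                0, 0, 0, 1;
                0, -2 * ω₀, 3 * ω₀ ^ 2 - k / mD, -b / mD] :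
              Matrix (Fin 4) (Fin 4) ℝ)) = 0 → ρ.re < 0) ↔
    (0 < b ∧ 3 * ω₀ ^ 2 * mD < k) := by
  have hmrpos : 0 < mr := by
    rw [hmr]
    have hden : 0 < (N : ℝ) * mD + mC := by positivity
    positivity
  set a1 : ℝ := b / mD with ha1def
  set al : ℝ := 3 * ω₀ ^ 2 * mr / mD with haldef
  set W : ℝ := ω₀ ^ 2 + k / mD with hWdef
  have hal : 0 < al := by rw [haldef]; positivity
  have hWpos : 0 < W := by rw [hWdef]; positivity
  have ha1nn : 0 ≤ a1 := by rw [ha1def]; positivity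
  -- the characteristic polynomial evaluated at ρ
  have key : ∀ ρ : ℂ,
      (Polynomial.aeval ρ)
        (Matrix.charpoly
          (!![0, 1, 0, 0;
              -3 * ω₀ ^ 2 * mr / mD, 0, 0, 2 * ω₀;
              0, 0, 0, 1;
              0, -2 * ω₀, 3 * ω₀ ^ 2 - k / mD, -b / mD] :
            Matrix (Fin 4) (Fin 4) ℝ)) =
      ρ ^ 4 + (a1 : ℂ) * ρ ^ 3 + ((W + al : ℝ) : ℂ) * ρ ^ 2 + ((al * a1 : ℝ) : ℂ) * ρ
        + ((al * (W - 4 * ω₀ ^ 2) : ℝ) : ℂ) := by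
    intro ρ
    rw [Matrix.charpoly, AlgHom.map_det]
    have hcm : (Polynomial.aeval ρ).mapMatrix
        (charmatrix (!![0, 1, 0, 0;
              -3 * ω₀ ^ 2 * mr / mD, 0, 0, 2 * ω₀;
              0, 0, 0, 1;
              0, -2 * ω₀, 3 * ω₀ ^ 2 - k / mD, -b / mD] :
            Matrix (Fin 4) (Fin 4) ℝ)) =
        !![ρ, -1, 0, 0;
           -(-3 * ω₀ ^ 2 * mr / mD : ℝ), ρ, 0, -(2 * ω₀ : ℝ);
           0, 0, ρ, -1;
           0, -(-2 * ω₀ : ℝ), -((3 * ω₀ ^ 2 - k / mD : ℝ)), ρ - (-b / mD : ℝ)] := by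
      ext i j
      fin_cases i <;> fin_cases j <;>
        simp only [AlgHom.mapMatrix_apply, Matrix.map_apply] <;>
        first
        | (rw [charmatrix_apply_eq]; simp [Matrix.vecHead, Matrix.vecTail])
        | (rw [charmatrix_apply_ne _ _ _ (by decide)]; simp [Matrix.vecHead, Matrix.vecTail])
    rw [hcm, Matrix.det_succ_row_zero]
    simp [Fin.sum_univ_succ, Matrix.det_fin_three, Matrix.submatrix_apply, Fin.succAbove,
      Matrix.cons_val_zero, Matrix.cons_val_one, Matrix.head_cons, Matrix.cons_val_succ,
      Fin.lt_def, ha1def, haldef, hWdef, -Fin.val_fin_lt, -Fin.lt_def]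
    push_cast
    field_simp
    ring
  constructor
  · intro H
    have hkk : 3 * ω₀ ^ 2 * mD < k := by
      by_contra hkk
      push_neg at hkk
      have hW4 : W ≤ 4 * ω₀ ^ 2 := by
        have : k / mD ≤ 3 * ω₀ ^ 2 := by rw [div_le_iff₀ hmD]; linarith
        rw [hWdef]; nlinarith
      obtain ⟨σ, hσ0, hσeq⟩ := quartic_unstable_k a1 al W ω₀ ha1nn hal hWpos hW4
      have hroot : (Polynomial.aeval (σ : ℂ))
          (Matrix.charpoly
            (!![0, 1, 0, 0;
                -3 * ω₀ ^ 2 * mr / mD, 0, 0, 2 * ω₀;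
                0, 0, 0, 1;
                0, -2 * ω₀, 3 * ω₀ ^ 2 - k / mD, -b / mD] :
              Matrix (Fin 4) (Fin 4) ℝ)) = 0 := by
        rw [key]
        push_cast
        have h' := congrArg Complex.ofReal hσeq; push_cast at h' ⊢; linear_combination h'
      have := H (σ : ℂ) hroot
      simp only [Complex.ofReal_re] at this
      linarith
    refine ⟨?_, hkk⟩
    rcases hb.lt_or_eq with hb' | hb'
    · exact hb'
    · -- b = 0 : purely imaginary eigenvalue exists, contradiction
      exfalso
      have hW4 : 4 * ω₀ ^ 2 < W := by
        have : 3 * ω₀ ^ 2 < k / mD := by rw [lt_div_iff₀ hmD]; linarith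
        rw [hWdef]; nlinarith
      have ha1z : a1 = 0 := by rw [ha1def, ← hb', zero_div]
      obtain ⟨ρ, hρeq, hρre⟩ := quartic_unstable_b al W ω₀ hω₀ hal hW4
      have hroot : (Polynomial.aeval ρ)
          (Matrix.charpoly
            (!![0, 1, 0, 0;
                -3 * ω₀ ^ 2 * mr / mD, 0, 0, 2 * ω₀;
                0, 0, 0, 1;
                0, -2 * ω₀, 3 * ω₀ ^ 2 - k / mD, -b / mD] :
              Matrix (Fin 4) (Fin 4) ℝ)) = 0 := by
        rw [key, ha1z]
        push_cast
        push_cast at hρeq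
        linear_combination hρeq
      have := H ρ hroot
      rw [hρre] at this
      exact lt_irrefl 0 this
  · rintro ⟨hb', hk'⟩ ρ hρ
    rw [key] at hρ
    have ha1 : 0 < a1 := by rw [ha1def]; positivity
    have hW4 : 4 * ω₀ ^ 2 < W := by
      have : 3 * ω₀ ^ 2 < k / mD := by rw [lt_div_iff₀ hmD]; linarith
      rw [hWdef]; nlinarith
    exact quartic_stable a1 al W ω₀ hω₀ ha1 hal hW4 ρ hρ
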